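/- Every quadratic dynamic equation q^i_{tt} = a^i_{jk}(q) q^j_t q^k_t + b^i_j(q) q^j_t + f^i(q) on Q → ℝ is equivalent to the geodesic equation q̈^0 = 0, q̇^0 = 1, q̈^i = a^i_{jk} q̇^j q̇^k + b^i_j q̇^j q̇^0 + f^i q̇^0 q̇^0 on TQ with respect to the linear connection K with components K_λ{}^0{}_ν = 0, K_0{}^i{}_0 = f^i, K_0{}^i{}_j = (1/2) b^i_j, K_j{}^i{}_0 = (1/2) b^i_j, K_k{}^i{}_j = a^i_{kj}: a curve c(t) = (t, c^i(t)) solves the dynamic equation iff its tangent lift (with q̇^0 ≡ 1) solves the geodesic equation. -/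
import Mathlib


/- STATEMENT 10: On Q = ℝ × ℝ^m, a quadratic dynamic equation
   c̈^i = a^i_{jk}(t,c) ċ^j ċ^k + b^i_j(t,c) ċ^j + f^i(t,c)
   is equivalent to the geodesic equation on TQ for the linear connection K with
   K_λ{}^0{}_ν = 0, K_0{}^i{}_0 = f^i, K_0{}^i{}_j = K_j{}^i{}_0 = (1/2) b^i_j,
   K_k{}^i{}_j = a^i_{kj}: the curve t ↦ (t, c(t)) (velocity (1, ċ)) is a
   geodesic of K iff c solves the dynamic equation. -/
theorem stmt10 (m : ℕ)
    (a : Fin m → Fin m → Fin m → (ℝ × (Fin m → ℝ)) → ℝ)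
    (b : Fin m → Fin m → (ℝ × (Fin m → ℝ)) → ℝ)
    (f : Fin m → (ℝ × (Fin m → ℝ)) → ℝ)
    (hasym : ∀ i j k x, a i j k x = a i k j x)
    (K : Option (Fin m) → Option (Fin m) → Option (Fin m) → (ℝ × (Fin m → ℝ)) → ℝ)
    (hK0 : ∀ μ ν x, K μ none ν x = 0)
    (hK00 : ∀ i x, K none (some i) none x = f i x)
    (hK0j : ∀ i j x, K none (some i) (some j) x = (1/2) * b i j x)
    (hKj0 : ∀ i j x, K (some j) (some i) none x = (1/2) * b i j x)
    (hKkj : ∀ i k j x, K (some k) (some i) (some j) x = a i k j x)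
    (c : ℝ → Fin m → ℝ) (hc : ∀ i, ContDiff ℝ 2 (fun t => c t i))
    (X : ℝ → Option (Fin m) → ℝ)
    (hX : ∀ s, X s none = s ∧ ∀ i, X s (some i) = c s i) :
    (∀ t i, deriv (deriv fun s => c s i) t =
        ∑ j, ∑ k, a i j k (t, c t) * deriv (fun s => c s j) t * deriv (fun s => c s k) t
          + ∑ j, b i j (t, c t) * deriv (fun s => c s j) t + f i (t, c t)) ↔
    (∀ t (l : Option (Fin m)), deriv (deriv fun s => X s l) t =
        ∑ μ, ∑ ν, K μ l ν (t, c t) * deriv (fun s => X s μ) t * deriv (fun s => X s ν) t) := by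
  have hXn : (fun s => X s none) = fun s => s := funext fun s => (hX s).1
  have hXi : ∀ i, (fun s => X s (some i)) = fun s => c s i :=
    fun i => funext fun s => (hX s).2 i
  have hd0 : ∀ t, deriv (fun s => X s none) t = 1 := by
    intro t; rw [hXn]; simp
  have hdd0 : ∀ t, deriv (deriv fun s => X s none) t = 0 := by
    intro t; rw [hXn]; simp
  have main : ∀ t i,
      (∑ μ, ∑ ν, K μ (some i) ν (t, c t) * deriv (fun s => X s μ) t * deriv (fun s => X s ν) t)
      = ∑ j, ∑ k, a i j k (t, c t) * deriv (fun s => c s j) t * deriv (fun s => c s k) t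
          + ∑ j, b i j (t, c t) * deriv (fun s => c s j) t + f i (t, c t) := by
    intro t i
    simp only [Fintype.sum_option, hK00, hK0j, hKj0, hKkj, hd0, hXi, mul_one, one_mul]
    have hb : ∑ j, 1/2 * b i j (t, c t) * deriv (fun s => c s j) t
        = 1/2 * ∑ j, b i j (t, c t) * deriv (fun s => c s j) t := by
      rw [Finset.mul_sum]; exact Finset.sum_congr rfl fun _ _ => by ring
    rw [Finset.sum_add_distrib, hb]
    ring
  constructor
  · intro h t l
    cases l with
    | none =>
      rw [hdd0]
      simp [hK0]
    | some i =>
      rw [hXi, main t i]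
      exact h t i
  · intro h t i
    have := h t (some i)
    rw [hXi, main t i] at this
    exact this
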